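/- arXiv:0912.3958 — 4 statements merged into one kernel-verified Lean document; each statement's English description precedes it below -/
import Mathlib

section
/- For α = 0 and any σ ∈ (0,2π), the complex expression β̂±,ₖ = (1/2)·(1−e^{−2kσ})·Re[ (1+ik)(1 ± e^{−(k−2i)σ}) / ((1 ± e^{−kσ})(1 − e^{−2(k−i)σ}) ) ] equals the real expression (1/2)·(cosh²(kσ) − cos²σ ∓ cosh(kσ)sin²σ ∓ k·sinσ·cosσ·sinh(kσ)) / (cosh²(kσ) − cos²σ), for every real k > 0. -/
set_option maxHeartbeats 2000000

/-- For α = 0 and σ ∈ (0,2π), the complex formula for the per-mode optimal constant β̂±,ₖ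
equals the manifestly real expression.  The sign ε = ±1 encodes the `±` subscript,
and `∓` on the right-hand side becomes `- ε * ⬝`. -/
theorem stmt1 (σ k ε : ℝ) (hσ : σ ∈ Set.Ioo 0 (2 * Real.pi)) (hk : 0 < k)
    (hε : ε = 1 ∨ ε = -1) :
    (1 / 2) * (1 - Real.exp (-2 * k * σ)) *
      ((1 + Complex.I * (k : ℂ)) *
          (1 + (ε : ℂ) * Complex.exp (-((k : ℂ) - 2 * Complex.I) * (σ : ℂ))) /
        ((1 + (ε : ℂ) * Complex.exp (-(k : ℂ) * (σ : ℂ))) *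
          (1 - Complex.exp (-2 * ((k : ℂ) - Complex.I) * (σ : ℂ))))).re
    = (1 / 2) *
        (Real.cosh (k * σ) ^ 2 - Real.cos σ ^ 2 - ε * Real.cosh (k * σ) * Real.sin σ ^ 2
          - ε * k * Real.sin σ * Real.cos σ * Real.sinh (k * σ)) /
      (Real.cosh (k * σ) ^ 2 - Real.cos σ ^ 2) := by
  obtain ⟨hσ0, hσ2⟩ := hσ
  have hkσ : 0 < k * σ := mul_pos hk hσ0
  have hB0 : (0:ℝ) < Real.exp (-(k*σ)) := Real.exp_pos _
  have hB1 : Real.exp (-(k*σ)) < 1 := Real.exp_lt_one_iff.mpr (by linarith)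
  have h1 : Complex.exp (-((k:ℂ) - 2 * Complex.I) * (σ:ℂ)) =
      ((Real.exp (-(k*σ)) : ℝ) : ℂ) * (((Real.cos (2*σ) : ℝ) : ℂ) + ((Real.sin (2*σ) : ℝ):ℂ) * Complex.I) := by
    rw [show -((k:ℂ) - 2 * Complex.I) * (σ:ℂ) = ((-(k*σ) : ℝ) : ℂ) + ((2*σ : ℝ) : ℂ) * Complex.I by push_cast; ring,
      Complex.exp_add, ← Complex.ofReal_exp, Complex.exp_mul_I, ← Complex.ofReal_cos, ← Complex.ofReal_sin]
  have h2 : Complex.exp (-2 * ((k:ℂ) - Complex.I) * (σ:ℂ)) =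
      ((Real.exp (-(k*σ))^2 : ℝ) : ℂ) * (((Real.cos (2*σ) : ℝ) : ℂ) + ((Real.sin (2*σ) : ℝ):ℂ) * Complex.I) := by
    rw [show -2 * ((k:ℂ) - Complex.I) * (σ:ℂ) = ((-(k*σ) + -(k*σ) : ℝ) : ℂ) + ((2*σ : ℝ) : ℂ) * Complex.I by push_cast; ring,
      Complex.exp_add, ← Complex.ofReal_exp, Complex.exp_mul_I, ← Complex.ofReal_cos, ← Complex.ofReal_sin,
      Real.exp_add, ← sq]
  have h3 : Complex.exp (-(k:ℂ) * (σ:ℂ)) = ((Real.exp (-(k*σ)) : ℝ) : ℂ) := by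
    rw [show -(k:ℂ) * (σ:ℂ) = ((-(k*σ) : ℝ) : ℂ) by push_cast; ring, Complex.ofReal_exp]
  have hE2 : Real.exp (-2 * k * σ) = Real.exp (-(k*σ))^2 := by
    rw [sq, ← Real.exp_add]; ring_nf
  rw [h1, h2, h3, hE2, Real.cosh_eq, Real.sinh_eq, Real.cos_sq, Real.sin_sq, Real.cos_sq,
    show Real.exp (k*σ) = (Real.exp (-(k*σ)))⁻¹ by rw [← Real.exp_neg, neg_neg],
    show ε * k * Real.sin σ * Real.cos σ * (((Real.exp (-(k * σ)))⁻¹ - Real.exp (-(k * σ))) / 2)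
       = ε * k * (Real.sin (2*σ)/2) * (((Real.exp (-(k * σ)))⁻¹ - Real.exp (-(k * σ))) / 2) by
      rw [Real.sin_two_mul]; ring]
  simp only [Complex.div_re, Complex.mul_re, Complex.mul_im, Complex.add_re, Complex.add_im,
    Complex.sub_re, Complex.sub_im, Complex.one_re, Complex.one_im, Complex.I_re, Complex.I_im,
    Complex.ofReal_re, Complex.ofReal_im, Complex.normSq_apply, mul_zero, zero_mul, mul_one,
    one_mul, zero_add, add_zero, sub_zero, zero_sub, neg_zero, neg_neg]
  set B := Real.exp (-(k*σ)) with hB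
  set c2 := Real.cos (2*σ) with hc2
  set s2 := Real.sin (2*σ) with hs2
  have pyth : s2^2 + c2^2 = 1 := Real.sin_sq_add_cos_sq _
  have hBne : B ≠ 0 := ne_of_gt hB0
  have hBB : B * B⁻¹ = 1 := mul_inv_cancel₀ hBne
  have hc2le : c2 ≤ 1 := by nlinarith [sq_nonneg s2, sq_nonneg (c2-1), sq_nonneg (c2+1)]
  have hB2 : B^2 < 1 := by nlinarith
  have h6 : (0:ℝ) < (1-B^2)^2 := pow_pos (by linarith) 2
  have hden1 : (0:ℝ) < 1 + ε * B := by rcases hε with rfl|rfl <;> nlinarith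
  have hP2 : (0:ℝ) < (1 + B^2)^2 - 2*B^2*(1+c2) := by
    nlinarith [mul_nonneg (mul_nonneg hB0.le hB0.le) (sub_nonneg.mpr hc2le)]
  have hP1 : (0:ℝ) < (1 - B^2*c2)^2 + (B^2*s2)^2 := by
    have expand : (1 - B^2*c2)^2 + (B^2*s2)^2 = (1-B^2)^2 + 2*B^2*(1-c2) := by
      linear_combination (B^4) * pyth
    rw [expand]
    nlinarith [mul_nonneg (mul_nonneg hB0.le hB0.le) (sub_nonneg.mpr hc2le)]
  have hq : (0:ℝ) < ((B⁻¹ + B) / 2) ^ 2 - (1 / 2 + c2 / 2) := by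
    have : ((B⁻¹ + B) / 2) ^ 2 - (1 / 2 + c2 / 2) = ((1 + B^2)^2 - 2*B^2*(1+c2)) / (4*B^2) := by
      field_simp; ring
    rw [this]
    exact div_pos hP2 (by positivity)
  have hns : (0:ℝ) < (1 + ε * B) * (1 - B ^ 2 * c2) * ((1 + ε * B) * (1 - B ^ 2 * c2)) +
      (1 + ε * B) * -(B ^ 2 * s2) * ((1 + ε * B) * -(B ^ 2 * s2)) := by
    nlinarith [mul_pos (mul_pos hden1 hden1) hP1]
  rcases hε with rfl | rfl
  · field_simp
    rw [div_eq_iff (ne_of_gt (by nlinarith [hP1]))]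
    linear_combination ((-1)*B^3 + (1)*B^5*c2^1 + (1)*B^5 + (-1)*B^7*c2^1 + (-1)*B^8*c2^1 + (1)*B^6 + (1)*B^6*c2^1 + (1)*B^6*s2^1*k^1 + (-1)*B^8*s2^1*k^1 + (-1)*B^4 + (1)*B^5*s2^1*k^1 + (-1)*B^7*s2^1*k^1) * pyth
  · field_simp
    rw [div_eq_iff (ne_of_gt (by nlinarith [mul_pos hden1 hP1]))]
    linear_combination ((1)*B^3 + (-1)*B^5*c2^1 + (-1)*B^5 + (1)*B^7*c2^1 + (-1)*B^4 + (1)*B^6*c2^1 + (-1)*B^8*c2^1 + (1)*B^6 + (1)*B^6*s2^1*k^1 + (-1)*B^5*s2^1*k^1 + (-1)*B^8*s2^1*k^1 + (1)*B^7*s2^1*k^1) * pyth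
end

section
/- Fix σ ∈ (0,2π) and a real α ≠ 1. Then β̂±,ₖ = ((k²+α²)/(2k²(1−α)))·(1−e^{−2kσ})·Re[ (1−α+ik)(1 ± e^{−(k+iα−2i)σ}) / ((1 ± e^{−(k−iα)σ})(1 − e^{−2(k+iα−i)σ}) ) ] tends to 1/2 as k → +∞. -/
open Filter Complex

private lemma aux_mul_exp (c : ℝ) (hc : 0 < c) :
    Tendsto (fun k : ℝ => k * Real.exp (-(c * k))) atTop (nhds 0) := by
  have h1 := Real.tendsto_pow_mul_exp_neg_atTop_nhds_zero 1
  have h2 : Tendsto (fun k : ℝ => c * k) atTop atTop :=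
    Tendsto.const_mul_atTop hc tendsto_id
  have h3 := (h1.comp h2).const_mul (1 / c)
  simp only [mul_zero] at h3
  refine h3.congr fun k => ?_
  field_simp
  simp only [Function.comp_apply]

/-- For fixed σ ∈ (0,2π) and α ≠ 1, the per-mode optimal constant β̂±,ₖ tends to 1/2
as k → +∞.  The sign ε = ±1 encodes the `±` subscript. -/
theorem stmt2 (σ α : ℝ) (hσ : σ ∈ Set.Ioo 0 (2 * Real.pi)) (hα : α ≠ 1)
    (ε : ℂ) (hε : ε = 1 ∨ ε = -1) :
    Filter.Tendsto (fun k : ℝ =>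
      ((k ^ 2 + α ^ 2) / (2 * k ^ 2 * (1 - α))) * (1 - Real.exp (-2 * k * σ)) *
        ((1 - (α : ℂ) + Complex.I * (k : ℂ)) *
            (1 + ε * Complex.exp (-((k : ℂ) + Complex.I * (α : ℂ) - 2 * Complex.I) * (σ : ℂ))) /
          ((1 + ε * Complex.exp (-((k : ℂ) - Complex.I * (α : ℂ)) * (σ : ℂ))) *
            (1 - Complex.exp (-2 * ((k : ℂ) + Complex.I * (α : ℂ) - Complex.I) * (σ : ℂ))))).re)
      Filter.atTop (nhds (1 / 2)) := by
  obtain ⟨hσ0, hσ2⟩ := hσ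
  have hα' : (1 : ℝ) - α ≠ 0 := sub_ne_zero.mpr (Ne.symm hα)
  have hεn : ‖ε‖ = 1 := by rcases hε with h | h <;> simp [h]
  -- abbreviations
  set E1 : ℝ → ℂ := fun k =>
    ε * Complex.exp (-((k : ℂ) + Complex.I * (α : ℂ) - 2 * Complex.I) * (σ : ℂ)) with hE1
  set E2 : ℝ → ℂ := fun k =>
    ε * Complex.exp (-((k : ℂ) - Complex.I * (α : ℂ)) * (σ : ℂ)) with hE2
  set E3 : ℝ → ℂ := fun k =>
    Complex.exp (-2 * ((k : ℂ) + Complex.I * (α : ℂ) - Complex.I) * (σ : ℂ)) with hE3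
  set w : ℝ → ℂ := fun k => 1 - (α : ℂ) + Complex.I * (k : ℂ) with hw
  set c : ℝ → ℝ := fun k =>
    ((k ^ 2 + α ^ 2) / (2 * k ^ 2 * (1 - α))) * (1 - Real.exp (-2 * k * σ)) with hc
  set u : ℝ → ℝ := fun k => Real.exp (-(k * σ)) with hu
  -- norms of exponentials
  have hnE1 : ∀ k : ℝ, ‖E1 k‖ = u k := by
    intro k
    rw [hE1, hu]
    simp only [norm_mul, hεn, one_mul, Complex.norm_exp]
    congr 1
    simp [Complex.mul_re, Complex.sub_re, Complex.add_re, Complex.mul_im]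
  have hnE2 : ∀ k : ℝ, ‖E2 k‖ = u k := by
    intro k
    rw [hE2, hu]
    simp only [norm_mul, hεn, one_mul, Complex.norm_exp]
    congr 1
    simp [Complex.mul_re, Complex.sub_re, Complex.add_re, Complex.mul_im]
  have hnE3 : ∀ k : ℝ, ‖E3 k‖ = u k ^ 2 := by
    intro k
    rw [hE3, hu]
    rw [show (u k ^ 2 : ℝ) = Real.exp (-(k * σ) + -(k * σ)) by
      rw [Real.exp_add]; ring_nf; rfl]
    simp only [Complex.norm_exp]
    congr 1
    simp [Complex.mul_re, Complex.sub_re, Complex.add_re, Complex.mul_im]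
    ring
  have hu_pos : ∀ k : ℝ, 0 < u k := fun k => Real.exp_pos _
  have hu_lt : ∀ k : ℝ, 1 ≤ k → u k < 1 := by
    intro k hk
    rw [hu]
    simp only
    rw [Real.exp_lt_one_iff]
    nlinarith
  -- nonvanishing of denominators
  have hden2 : ∀ k : ℝ, 1 ≤ k → 1 + E2 k ≠ 0 := by
    intro k hk h
    have hE : E2 k = -1 := by linear_combination h
    have h1 : ‖E2 k‖ = u k := hnE2 k
    rw [hE] at h1
    simp at h1
    nlinarith [hu_lt k hk, h1]
  have hden3 : ∀ k : ℝ, 1 ≤ k → 1 - E3 k ≠ 0 := by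
    intro k hk h
    have hE : E3 k = 1 := by linear_combination -h
    have h1 : ‖E3 k‖ = u k ^ 2 := hnE3 k
    rw [hE] at h1
    simp at h1
    nlinarith [hu_lt k hk, hu_pos k, h1]
  -- limit of c
  have hC : Tendsto c atTop (nhds (1 / (2 * (1 - α)))) := by
    have l1 : Tendsto (fun k : ℝ => (k ^ 2 + α ^ 2) / (2 * k ^ 2 * (1 - α))) atTop
        (nhds (1 / (2 * (1 - α)))) := by
      have hinv : Tendsto (fun k : ℝ => (k ^ 2)⁻¹) atTop (nhds 0) :=
        tendsto_inv_atTop_zero.comp (tendsto_pow_atTop (n := 2) (by norm_num))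
      have : Tendsto (fun k : ℝ => (1 + α ^ 2 * (k ^ 2)⁻¹) * (1 / (2 * (1 - α)))) atTop
          (nhds ((1 + α ^ 2 * 0) * (1 / (2 * (1 - α))))) :=
        (((hinv.const_mul (α ^ 2)).const_add 1)).mul_const _
      simp only [mul_zero, add_zero, one_mul] at this
      refine this.congr' ?_
      filter_upwards [eventually_ge_atTop (1 : ℝ)] with k hk
      have hk0 : k ≠ 0 := by linarith
      field_simp
    have l2 : Tendsto (fun k : ℝ => 1 - Real.exp (-2 * k * σ)) atTop (nhds (1 - 0)) := by
      refine Tendsto.const_sub 1 ?_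
      refine Real.tendsto_exp_atBot.comp ?_
      have : Tendsto (fun k : ℝ => 2 * σ * k) atTop atTop :=
        Tendsto.const_mul_atTop (by linarith) tendsto_id
      have h := tendsto_neg_atBot_iff.2 this
      refine h.congr fun k => by ring
    have := l1.mul l2
    simp only [sub_zero, mul_one] at this
    exact this
  -- remainder tends to zero
  set D : ℝ → ℂ := fun k => E1 k - E2 k + E3 k + E2 k * E3 k with hD
  set r : ℝ → ℝ := fun k => (w k * D k / ((1 + E2 k) * (1 - E3 k))).re with hr
  have hR : Tendsto r atTop (nhds 0) := by
    apply squeeze_zero_norm' (a := fun k =>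
      (|1 - α| + k) * (4 * u k) / ((1 - u k) * (1 - u k ^ 2)))
    · filter_upwards [eventually_ge_atTop (1 : ℝ)] with k hk
      have huk := hu_lt k hk
      have hup := hu_pos k
      have hd1 : (0 : ℝ) < 1 - u k := by linarith
      have hd2 : (0 : ℝ) < 1 - u k ^ 2 := by nlinarith
      have h1 : ‖r k‖ ≤ ‖w k * D k / ((1 + E2 k) * (1 - E3 k))‖ := by
        rw [hr]
        exact Complex.abs_re_le_norm _
      refine h1.trans ?_
      rw [norm_div, norm_mul, norm_mul]
      have hwk : ‖w k‖ ≤ |1 - α| + k := by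
        rw [hw]
        refine (norm_add_le _ _).trans ?_
        have e1 : ‖(1 : ℂ) - (α : ℂ)‖ = |1 - α| := by
          rw [show ((1 : ℂ) - α) = ((1 - α : ℝ) : ℂ) by push_cast; ring]
          rw [Complex.norm_real, Real.norm_eq_abs]
        have e2 : ‖Complex.I * (k : ℂ)‖ = k := by
          rw [norm_mul, Complex.norm_I, one_mul, Complex.norm_real, Real.norm_eq_abs,
            _root_.abs_of_nonneg (by linarith : (0:ℝ) ≤ k)]
        rw [e1, e2]
      have hDk : ‖D k‖ ≤ 4 * u k := by
        rw [hD]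
        calc ‖E1 k - E2 k + E3 k + E2 k * E3 k‖
            ≤ ‖E1 k - E2 k + E3 k‖ + ‖E2 k * E3 k‖ := norm_add_le _ _
          _ ≤ (‖E1 k - E2 k‖ + ‖E3 k‖) + ‖E2 k‖ * ‖E3 k‖ := by
              rw [norm_mul]; gcongr; exact norm_add_le _ _
          _ ≤ ((‖E1 k‖ + ‖E2 k‖) + ‖E3 k‖) + ‖E2 k‖ * ‖E3 k‖ := by
              gcongr; exact norm_sub_le _ _
          _ = u k + u k + u k ^ 2 + u k * u k ^ 2 := by
              rw [hnE1, hnE2, hnE3]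
          _ ≤ 4 * u k := by nlinarith
      have hden : (1 - u k) * (1 - u k ^ 2) ≤ ‖1 + E2 k‖ * ‖1 - E3 k‖ := by
        have hb1 : 1 - u k ≤ ‖1 + E2 k‖ := by
          have := norm_add_le (1 + E2 k) (-E2 k)
          simp only [add_neg_cancel_right, norm_one, norm_neg] at this
          rw [hnE2] at this
          linarith
        have hb2 : 1 - u k ^ 2 ≤ ‖1 - E3 k‖ := by
          have := norm_add_le (1 - E3 k) (E3 k)
          simp only [sub_add_cancel, norm_one] at this
          rw [hnE3] at this
          linarith
        exact mul_le_mul hb1 hb2 hd2.le (norm_nonneg _)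
      refine div_le_div₀ (by positivity) ?_ (by positivity) hden
      exact mul_le_mul hwk hDk (norm_nonneg _) (by positivity)
    · have hnum : Tendsto (fun k : ℝ => (|1 - α| + k) * (4 * u k)) atTop (nhds 0) := by
        have h1 : Tendsto (fun k : ℝ => u k) atTop (nhds 0) := by
          refine Real.tendsto_exp_atBot.comp ?_
          have : Tendsto (fun k : ℝ => σ * k) atTop atTop :=
            Tendsto.const_mul_atTop hσ0 tendsto_id
          have h := tendsto_neg_atBot_iff.2 this
          refine h.congr fun k => by ring
        have h2 : Tendsto (fun k : ℝ => k * u k) atTop (nhds 0) := by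
          have := aux_mul_exp σ hσ0
          refine this.congr fun k => by rw [hu]; ring_nf
        have : Tendsto (fun k : ℝ => 4 * (|1 - α| * u k) + 4 * (k * u k)) atTop
            (nhds (4 * (|1 - α| * 0) + 4 * 0)) :=
          ((h1.const_mul _).const_mul 4).add (h2.const_mul 4)
        simp only [mul_zero, add_zero] at this
        refine this.congr fun k => by ring
      have hden : Tendsto (fun k : ℝ => (1 - u k) * (1 - u k ^ 2)) atTop (nhds 1) := by
        have h1 : Tendsto (fun k : ℝ => u k) atTop (nhds 0) := by
          refine Real.tendsto_exp_atBot.comp ?_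
          have : Tendsto (fun k : ℝ => σ * k) atTop atTop :=
            Tendsto.const_mul_atTop hσ0 tendsto_id
          have h := tendsto_neg_atBot_iff.2 this
          refine h.congr fun k => by ring
        have : Tendsto (fun k : ℝ => (1 - u k) * (1 - u k ^ 2)) atTop
            (nhds ((1 - 0) * (1 - 0 ^ 2))) :=
          (h1.const_sub 1).mul ((((h1.pow 2)).const_sub 1))
        simpa using this
      have := hnum.div hden one_ne_zero
      rw [zero_div] at this
      exact this
  -- combine
  have hmain : Tendsto (fun k => c k * (1 - α) + c k * r k) atTop (nhds (1 / 2)) := by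
    have h1 : Tendsto (fun k => c k * (1 - α)) atTop (nhds (1 / (2 * (1 - α)) * (1 - α))) :=
      hC.mul_const _
    have h2 : Tendsto (fun k => c k * r k) atTop (nhds (1 / (2 * (1 - α)) * 0)) := hC.mul hR
    have := h1.add h2
    rw [show 1 / (2 * (1 - α)) * (1 - α) + 1 / (2 * (1 - α)) * 0 = 1 / 2 by
      field_simp
      ring] at this
    exact this
  refine hmain.congr' ?_
  filter_upwards [eventually_ge_atTop (1 : ℝ)] with k hk
  have h2 := hden2 k hk
  have h3 := hden3 k hk
  have key : w k * (1 + E1 k) / ((1 + E2 k) * (1 - E3 k))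
      = w k + w k * D k / ((1 + E2 k) * (1 - E3 k)) := by
    rw [hD]
    field_simp
    ring
  have hre : (w k * (1 + E1 k) / ((1 + E2 k) * (1 - E3 k))).re = (1 - α) + r k := by
    rw [key, Complex.add_re, hr, hw]
    simp
  show c k * (1 - α) + c k * r k = c k * _
  rw [hre]
  ring
end

section
/- Define, for σ ∈ (0,2π) and real α with α ≠ 1, α ≠ 0, ασ ∉ πℤ, and (1−α)σ ∉ πℤ: β̂₊,₀(α) = α²·ψ₃ / (2(1−cos(ασ))(1−cos(2(1−α)σ))), where ψ₃ = 2σ² − σ²(cos(ασ) + cos((2−α)σ)) − (σ/(1−α))·(sin((2−2α)σ) − (sin((2−α)σ) − sin(ασ))). Then β̂₊,₀ extends continuously to α = 0 with value 1, and its derivative with respect to α at α = 0 equals σ·cot σ − 1 (for σ with sin σ ≠ 0). -/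
/-- The limiting per-mode constant β̂₊,₀ as a function of the weight exponent α,
extended by the value 1 at α = 0. -/
noncomputable def betaPlusZero (σ : ℝ) : ℝ → ℝ := fun α =>
  if α = 0 then 1 else
    α ^ 2 *
        (2 * σ ^ 2 - σ ^ 2 * (Real.cos (α * σ) + Real.cos ((2 - α) * σ))
          - (σ / (1 - α)) *
            (Real.sin ((2 - 2 * α) * σ) - (Real.sin ((2 - α) * σ) - Real.sin (α * σ)))) /
      (2 * (1 - Real.cos (α * σ)) * (1 - Real.cos (2 * (1 - α) * σ)))

noncomputable def qfun (σ : ℝ) : ℝ → ℝ := fun α =>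
  if α = 0 then σ ^ 2 / 2 else (1 - Real.cos (α * σ)) / α ^ 2

lemma qfun_hasDerivAt (σ : ℝ) : HasDerivAt (qfun σ) 0 0 := by
  rw [hasDerivAt_iff_tendsto_slope]
  apply squeeze_zero_norm' (a := fun α : ℝ => σ ^ 4 * (5 / 96) * |α|)
  · have hpos : (0:ℝ) < (|σ| + 1)⁻¹ := by positivity
    have hev : ∀ᶠ α in nhdsWithin (0:ℝ) {(0:ℝ)}ᶜ, |α| < (|σ| + 1)⁻¹ := by
      apply eventually_nhdsWithin_of_eventually_nhds
      simpa using eventually_abs_sub_lt (0:ℝ) hpos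
    filter_upwards [self_mem_nhdsWithin, hev] with α hα0 hαs
    have hαne : α ≠ 0 := hα0
    have hσ1 : (0:ℝ) < |σ| + 1 := by positivity
    have hx : |α * σ| ≤ 1 := by
      rw [abs_mul]
      have h1 : |α| * (|σ| + 1) < 1 := by
        have := (mul_lt_mul_of_pos_right hαs hσ1)
        rwa [inv_mul_cancel₀ hσ1.ne'] at this
      nlinarith [abs_nonneg α, abs_nonneg σ]
    have key := Real.cos_bound hx
    have hslope : slope (qfun σ) 0 α = -(Real.cos (α * σ) - (1 - (α * σ) ^ 2 / 2)) / α ^ 3 := by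
      rw [slope_def_field]
      simp only [qfun, if_neg hαne, if_pos rfl, eq_self_iff_true, if_true]
      field_simp
      ring
    rw [hslope, Real.norm_eq_abs, abs_div, abs_neg]
    have habs : |σ| ^ 4 = σ ^ 4 := by
      rw [← abs_pow, abs_of_nonneg (by positivity)]
    have hαpos : (0:ℝ) < |α| := abs_pos.2 hαne
    calc |Real.cos (α * σ) - (1 - (α * σ) ^ 2 / 2)| / |α ^ 3|
        ≤ (|α * σ| ^ 4 * (5 / 96)) / |α ^ 3| := by gcongr
      _ = σ ^ 4 * (5 / 96) * |α| := by
          rw [abs_mul, abs_pow, mul_pow, habs]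
          field_simp
  · have h : Filter.Tendsto (fun α : ℝ => σ ^ 4 * (5 / 96) * |α|) (nhds 0) (nhds 0) := by
      have hcont : Continuous (fun α : ℝ => σ ^ 4 * (5 / 96) * |α|) :=
        continuous_const.mul _root_.continuous_abs
      simpa using hcont.tendsto 0
    exact h.mono_left nhdsWithin_le_nhds



/-- For fixed σ ∈ (0,2π) with sin σ ≠ 0 and sin 2σ ≠ 0, the function β̂₊,₀(α) extends
continuously to α = 0 with value 1, and its derivative in α at α = 0 is σ·cot σ − 1. -/
theorem stmt5 (σ : ℝ) (hσ : σ ∈ Set.Ioo 0 (2 * Real.pi))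
    (h1 : Real.sin σ ≠ 0) (h2 : Real.sin (2 * σ) ≠ 0) :
    ContinuousAt (betaPlusZero σ) 0 ∧ betaPlusZero σ 0 = 1 ∧
      HasDerivAt (betaPlusZero σ) (σ * Real.cot σ - 1) 0 := by
  obtain ⟨hσ0, _⟩ := hσ
  have hσne : σ ≠ 0 := ne_of_gt hσ0
  have h2s : 1 - Real.cos (2 * σ) = 2 * Real.sin σ ^ 2 := by
    rw [Real.cos_two_mul']
    nlinarith [Real.sin_sq_add_cos_sq σ]
  have hcne : 1 - Real.cos (2 * σ) ≠ 0 := by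
    rw [h2s]; exact mul_ne_zero two_ne_zero (pow_ne_zero 2 h1)
  set N : ℝ → ℝ := fun α =>
    2 * σ ^ 2 - σ ^ 2 * (Real.cos (α * σ) + Real.cos ((2 - α) * σ))
      - (σ / (1 - α)) *
        (Real.sin ((2 - 2 * α) * σ) - (Real.sin ((2 - α) * σ) - Real.sin (α * σ))) with hNdef
  set D : ℝ → ℝ := fun α => 2 * qfun σ α * (1 - Real.cos (2 * (1 - α) * σ)) with hDdef
  have hD0ne : D 0 ≠ 0 := by
    simp only [hDdef, qfun, if_pos rfl]
    norm_num
    constructor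
    · exact hσne
    · simpa using hcne
  have hfun : betaPlusZero σ = fun α => N α / D α := by
    funext α
    by_cases hα : α = 0
    · subst hα
      have hd : (2:ℝ) * (σ ^ 2 / 2) * (1 - Real.cos (2 * σ)) ≠ 0 := by
        have h : (2:ℝ) * (σ ^ 2 / 2) * (1 - Real.cos (2 * σ)) = σ ^ 2 * (1 - Real.cos (2 * σ)) := by
          ring
        rw [h]
        exact mul_ne_zero (pow_ne_zero 2 hσne) hcne
      simp only [betaPlusZero, hNdef, hDdef, qfun, eq_self_iff_true, if_true, sub_zero, mul_one,
        zero_mul, mul_zero, Real.cos_zero, Real.sin_zero, div_one, sub_self]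
      rw [eq_comm, div_eq_one_iff_eq hd]
      ring
    · simp only [betaPlusZero, if_neg hα, hNdef, hDdef, qfun, if_neg hα]
      have hden : 2 * ((1 - Real.cos (α * σ)) / α ^ 2) * (1 - Real.cos (2 * (1 - α) * σ))
          = (2 * (1 - Real.cos (α * σ)) * (1 - Real.cos (2 * (1 - α) * σ))) / α ^ 2 := by
        ring
      rw [hden, div_div_eq_mul_div]
      ring
  -- derivative pieces
  have hid : HasDerivAt (fun α : ℝ => α) 1 0 := hasDerivAt_id 0
  have hA : HasDerivAt (fun α : ℝ => α * σ) σ 0 := by simpa using hid.mul_const σ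
  have hB : HasDerivAt (fun α : ℝ => (2 - α) * σ) (-σ) 0 := by
    simpa using ((hasDerivAt_const (0:ℝ) (2:ℝ)).sub hid).mul_const σ
  have hC : HasDerivAt (fun α : ℝ => (2 - 2 * α) * σ) (-(2 * σ)) 0 := by
    have := ((hasDerivAt_const (0:ℝ) (2:ℝ)).sub (hid.const_mul 2)).mul_const σ
    refine this.congr_deriv ?_; norm_num
  have hE : HasDerivAt (fun α : ℝ => 2 * (1 - α) * σ) (-(2 * σ)) 0 := by
    have := (((hasDerivAt_const (0:ℝ) (1:ℝ)).sub hid).const_mul 2).mul_const σ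
    refine this.congr_deriv ?_; norm_num
  have hcosA : HasDerivAt (fun α : ℝ => Real.cos (α * σ)) 0 0 := by
    have := (Real.hasDerivAt_cos ((0:ℝ) * σ)).comp 0 hA
    refine this.congr_deriv ?_; norm_num
  have hcosB : HasDerivAt (fun α : ℝ => Real.cos ((2 - α) * σ)) (Real.sin (2 * σ) * σ) 0 := by
    have := (Real.hasDerivAt_cos ((2 - (0:ℝ)) * σ)).comp 0 hB
    refine this.congr_deriv ?_; norm_num
  have hsinA : HasDerivAt (fun α : ℝ => Real.sin (α * σ)) σ 0 := by
    have := (Real.hasDerivAt_sin ((0:ℝ) * σ)).comp 0 hA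
    refine this.congr_deriv ?_; norm_num
  have hsinB : HasDerivAt (fun α : ℝ => Real.sin ((2 - α) * σ)) (-(Real.cos (2 * σ) * σ)) 0 := by
    have := (Real.hasDerivAt_sin ((2 - (0:ℝ)) * σ)).comp 0 hB
    refine this.congr_deriv ?_; norm_num
  have hsinC : HasDerivAt (fun α : ℝ => Real.sin ((2 - 2 * α) * σ)) (-(Real.cos (2 * σ) * (2 * σ))) 0 := by
    have := (Real.hasDerivAt_sin ((2 - 2 * (0:ℝ)) * σ)).comp 0 hC
    refine this.congr_deriv ?_; norm_num
  have hfrac : HasDerivAt (fun α : ℝ => σ / (1 - α)) σ 0 := by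
    have := (hasDerivAt_const (0:ℝ) σ).div ((hasDerivAt_const (0:ℝ) (1:ℝ)).sub hid) (by norm_num)
    refine this.congr_deriv ?_; norm_num
  have hu : HasDerivAt (fun α : ℝ =>
      Real.sin ((2 - 2 * α) * σ) - (Real.sin ((2 - α) * σ) - Real.sin (α * σ)))
      (σ * (1 - Real.cos (2 * σ))) 0 := by
    have := hsinC.sub (hsinB.sub hsinA)
    refine this.congr_deriv ?_; ring
  have hT : HasDerivAt (fun α : ℝ => (σ / (1 - α)) *
      (Real.sin ((2 - 2 * α) * σ) - (Real.sin ((2 - α) * σ) - Real.sin (α * σ))))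
      (σ ^ 2 * (1 - Real.cos (2 * σ))) 0 := by
    have := hfrac.mul hu
    refine this.congr_deriv ?_
    norm_num
    ring
  have hN : HasDerivAt N (-(σ ^ 2 * (Real.sin (2 * σ) * σ)) - σ ^ 2 * (1 - Real.cos (2 * σ))) 0 := by
    have := ((hasDerivAt_const (0:ℝ) (2 * σ ^ 2)).sub ((hcosA.add hcosB).const_mul (σ ^ 2))).sub hT
    rw [hNdef]
    refine this.congr_deriv ?_
    ring
  have hcosE : HasDerivAt (fun α : ℝ => 1 - Real.cos (2 * (1 - α) * σ)) (-(2 * σ * Real.sin (2 * σ))) 0 := by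
    have := (hasDerivAt_const (0:ℝ) (1:ℝ)).sub ((Real.hasDerivAt_cos (2 * (1 - (0:ℝ)) * σ)).comp 0 hE)
    refine this.congr_deriv ?_; norm_num; ring
  have hD : HasDerivAt D (-(2 * σ ^ 3 * Real.sin (2 * σ))) 0 := by
    have := ((qfun_hasDerivAt σ).const_mul 2).mul hcosE
    rw [hDdef]
    refine this.congr_deriv ?_
    simp [qfun]
    ring
  have hBd := hN.div hD hD0ne
  have hmain : HasDerivAt (betaPlusZero σ) (σ * Real.cot σ - 1) 0 := by
    rw [hfun]
    refine hBd.congr_deriv ?_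
    have hN0 : N 0 = σ ^ 2 * (1 - Real.cos (2 * σ)) := by
      simp [hNdef]; ring
    have hD0 : D 0 = σ ^ 2 * (1 - Real.cos (2 * σ)) := by
      simp only [hDdef, qfun, eq_self_iff_true, if_true, sub_zero, mul_one]
      ring
    rw [hN0, hD0, Real.cot_eq_cos_div_sin, Real.sin_two_mul, h2s]
    field_simp
    ring
  refine ⟨hmain.continuousAt, by simp [betaPlusZero], hmain⟩
end

section
/- Let k > 0, α real, σ > 0, μ = k+iα, ω = e^{−μσ}, and let q(θ) = α₊ e^{μ(θ−σ)} + α₋ e^{−μθ} with α₊, α₋ ∈ ℂ. Then ∂_θq(σ)·conj(q(σ)) − ∂_θq(0)·conj(q(0)) − ∫₀^σ 2(ikα − α²)|q(θ)|² dθ = ((k²+α²)/k)·(|α₊|² + |α₋|²)·(1 − |ω|²). -/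
/-- The boundary-term identity for the Fourier-space Stokes pressure energy:
∂_θq(σ)·conj q(σ) − ∂_θq(0)·conj q(0) − ∫₀^σ 2(ikα−α²)|q|² dθ
 = ((k²+α²)/k)(|α₊|²+|α₋|²)(1−e^{−2kσ}). -/
theorem stmt10 (k α σ : ℝ) (hk : 0 < k) (hσ : 0 < σ) (ap am : ℂ) :
    let μ : ℂ := (k : ℂ) + Complex.I * (α : ℂ)
    let q : ℝ → ℂ := fun θ =>
      ap * Complex.exp (μ * ((θ : ℂ) - (σ : ℂ))) + am * Complex.exp (-(μ * (θ : ℂ)))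
    deriv q σ * (starRingEnd ℂ) (q σ) - deriv q 0 * (starRingEnd ℂ) (q 0)
        - ∫ θ in (0 : ℝ)..σ,
            2 * (Complex.I * (k : ℂ) * (α : ℂ) - (α : ℂ) ^ 2) * ((‖q θ‖ ^ 2 : ℝ) : ℂ)
      = (((k ^ 2 + α ^ 2) / k * (‖ap‖ ^ 2 + ‖am‖ ^ 2) * (1 - Real.exp (-2 * k * σ)) : ℝ) : ℂ) := by
  intro μ q
  have hμdef : μ = (k : ℂ) + Complex.I * α := rfl
  have hqdef : ∀ t : ℝ, q t
      = ap * Complex.exp (μ * ((t : ℂ) - σ)) + am * Complex.exp (-(μ * (t : ℂ))) :=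
    fun t => rfl
  set ν : ℂ := (k : ℂ) - Complex.I * α with hνdef
  have hconjμ : (starRingEnd ℂ) μ = ν := by
    rw [hμdef, hνdef]; simp [Complex.conj_ofReal]; ring
  -- norms as products with conjugates
  have hmc : ∀ z : ℂ, ((‖z‖ ^ 2 : ℝ) : ℂ) = z * (starRingEnd ℂ) z := by
    intro z
    rw [Complex.mul_conj]; norm_cast
    simp [Complex.normSq_eq_norm_sq]
  -- conjugate of q
  have hqc : ∀ t : ℝ, (starRingEnd ℂ) (q t)
      = (starRingEnd ℂ) ap * Complex.exp (ν * ((t : ℂ) - σ))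
        + (starRingEnd ℂ) am * Complex.exp (-(ν * (t : ℂ))) := by
    intro t
    rw [hqdef]
    simp only [map_add, map_mul, ← Complex.exp_conj, map_sub, map_neg, Complex.conj_ofReal,
      hconjμ]
  -- derivative of q
  have hre : ∀ t : ℝ, HasDerivAt (fun x : ℝ => (x : ℂ)) 1 t := by
    intro t; exact Complex.ofRealCLM.hasDerivAt (x := t)
  have hderiv : ∀ t : ℝ, HasDerivAt q
      (μ * ap * Complex.exp (μ * ((t : ℂ) - σ)) - μ * am * Complex.exp (-(μ * (t : ℂ)))) t := by
    intro t
    have h1 : HasDerivAt (fun x : ℝ => Complex.exp (μ * ((x : ℂ) - σ)))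
        (Complex.exp (μ * ((t : ℂ) - σ)) * (μ * 1)) t :=
      (((hre t).sub_const (σ : ℂ)).const_mul μ).cexp
    have h2 : HasDerivAt (fun x : ℝ => Complex.exp (-(μ * (x : ℂ))))
        (Complex.exp (-(μ * (t : ℂ))) * (-(μ * 1))) t :=
      (((hre t).const_mul μ).neg).cexp
    have := (h1.const_mul ap).add (h2.const_mul am)
    refine this.congr_deriv ?_; ring
  -- the antiderivative H
  set H : ℝ → ℂ := fun t =>
    (μ * ap * Complex.exp (μ * ((t : ℂ) - σ)) - μ * am * Complex.exp (-(μ * (t : ℂ))))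
      * ((starRingEnd ℂ) ap * Complex.exp (ν * ((t : ℂ) - σ))
         + (starRingEnd ℂ) am * Complex.exp (-(ν * (t : ℂ))))
    - ((k : ℂ) ^ 2 + (α : ℂ) ^ 2) / k
        * (((‖ap‖ ^ 2 : ℝ) : ℂ) * Complex.exp (2 * k * ((t : ℂ) - σ))
           - ((‖am‖ ^ 2 : ℝ) : ℂ) * Complex.exp (-(2 * k * (t : ℂ)))) with hHdef
  have hH : ∀ t : ℝ, HasDerivAt H
      (2 * (Complex.I * (k : ℂ) * (α : ℂ) - (α : ℂ) ^ 2) * ((‖q t‖ ^ 2 : ℝ) : ℂ)) t := by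
    intro t
    have hE : HasDerivAt (fun x : ℝ => Complex.exp (μ * ((x : ℂ) - σ)))
        (Complex.exp (μ * ((t : ℂ) - σ)) * (μ * 1)) t :=
      (((hre t).sub_const (σ : ℂ)).const_mul μ).cexp
    have hF : HasDerivAt (fun x : ℝ => Complex.exp (-(μ * (x : ℂ))))
        (Complex.exp (-(μ * (t : ℂ))) * (-(μ * 1))) t :=
      (((hre t).const_mul μ).neg).cexp
    have hE' : HasDerivAt (fun x : ℝ => Complex.exp (ν * ((x : ℂ) - σ)))
        (Complex.exp (ν * ((t : ℂ) - σ)) * (ν * 1)) t :=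
      (((hre t).sub_const (σ : ℂ)).const_mul ν).cexp
    have hF' : HasDerivAt (fun x : ℝ => Complex.exp (-(ν * (x : ℂ))))
        (Complex.exp (-(ν * (t : ℂ))) * (-(ν * 1))) t :=
      (((hre t).const_mul ν).neg).cexp
    have hE2 : HasDerivAt (fun x : ℝ => Complex.exp (2 * k * ((x : ℂ) - σ)))
        (Complex.exp (2 * k * ((t : ℂ) - σ)) * ((2 * k) * 1)) t :=
      (((hre t).sub_const (σ : ℂ)).const_mul (2 * (k : ℂ))).cexp
    have hF2 : HasDerivAt (fun x : ℝ => Complex.exp (-(2 * k * (x : ℂ))))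
        (Complex.exp (-(2 * k * (t : ℂ))) * (-((2 * k) * 1))) t :=
      (((hre t).const_mul (2 * (k : ℂ))).neg).cexp
    have hprod := (((hE.const_mul (μ * ap)).sub (hF.const_mul (μ * am))).mul
      ((hE'.const_mul ((starRingEnd ℂ) ap)).add (hF'.const_mul ((starRingEnd ℂ) am))))
    have hrest := ((hE2.const_mul (((‖ap‖ ^ 2 : ℝ) : ℂ))).sub
      (hF2.const_mul (((‖am‖ ^ 2 : ℝ) : ℂ)))).const_mul (((k : ℂ) ^ 2 + (α : ℂ) ^ 2) / k)
    have hHt := hprod.sub hrest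
    refine hHt.congr_deriv ?_; symm; simp only [Pi.add_apply, Pi.sub_apply]
    -- identity between the two derivative expressions
    rw [hmc (q t), hqdef t, hqc t, hmc ap, hmc am]
    set E := Complex.exp (μ * ((t : ℂ) - σ)) with hE1
    set F := Complex.exp (-(μ * (t : ℂ))) with hF1
    set E' := Complex.exp (ν * ((t : ℂ) - σ)) with hE1'
    set F' := Complex.exp (-(ν * (t : ℂ))) with hF1'
    set E2 := Complex.exp (2 * (k : ℂ) * ((t : ℂ) - σ)) with hE21
    set F2 := Complex.exp (-(2 * (k : ℂ) * (t : ℂ))) with hF21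
    have hEE : E * E' = E2 := by
      rw [hE1, hE1', hE21, ← Complex.exp_add]; congr 1; rw [hμdef, hνdef]; ring
    have hFF : F * F' = F2 := by
      rw [hF1, hF1', hF21, ← Complex.exp_add]; congr 1; rw [hμdef, hνdef]; ring
    have hk' : (k : ℂ) ≠ 0 := by exact_mod_cast hk.ne'
    have hdiv : ((k : ℂ) ^ 2 + (α : ℂ) ^ 2) / (k : ℂ)
          * ((ap * (starRingEnd ℂ) ap) * E2 * (2 * (k : ℂ))
             - (am * (starRingEnd ℂ) am) * F2 * -(2 * (k : ℂ)))
        = 2 * ((k : ℂ) ^ 2 + (α : ℂ) ^ 2)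
          * ((ap * (starRingEnd ℂ) ap) * E2 + (am * (starRingEnd ℂ) am) * F2) := by
      field_simp; ring
    rw [hμdef, hνdef]
    linear_combination
      (-2 * ((k : ℂ) ^ 2 + (α : ℂ) ^ 2) * (ap * (starRingEnd ℂ) ap)) * hEE
      + (-2 * ((k : ℂ) ^ 2 + (α : ℂ) ^ 2) * (am * (starRingEnd ℂ) am)) * hFF
      + (-2 * (α : ℂ) ^ 2 * (ap * (starRingEnd ℂ) am * E * F'
          + am * (starRingEnd ℂ) ap * F * E')) * Complex.I_sq
      + hdiv
  -- continuity of the integrand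
  have hcq : Continuous q := by
    have : q = fun t : ℝ =>
        ap * Complex.exp (μ * ((t : ℂ) - σ)) + am * Complex.exp (-(μ * (t : ℂ))) :=
      funext hqdef
    rw [this]; fun_prop
  have hcont : Continuous fun t : ℝ =>
      2 * (Complex.I * (k : ℂ) * (α : ℂ) - (α : ℂ) ^ 2) * ((‖q t‖ ^ 2 : ℝ) : ℂ) := by
    fun_prop
  have hint : (∫ θ in (0 : ℝ)..σ,
      2 * (Complex.I * (k : ℂ) * (α : ℂ) - (α : ℂ) ^ 2) * ((‖q θ‖ ^ 2 : ℝ) : ℂ)) = H σ - H 0 :=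
    intervalIntegral.integral_eq_sub_of_hasDerivAt (fun x _ => hH x)
      (hcont.intervalIntegrable 0 σ)
  rw [hint, (hderiv σ).deriv, (hderiv 0).deriv, hqc σ, hqc 0, hHdef]
  simp only [Complex.ofReal_zero, zero_sub, sub_self, mul_zero, neg_zero, Complex.exp_zero,
    mul_one]
  push_cast
  have hk' : (k : ℂ) ≠ 0 := by exact_mod_cast hk.ne'
  have a1 : μ * -(σ : ℂ) = -(μ * σ) := by ring
  have a2 : ν * -(σ : ℂ) = -(ν * σ) := by ring
  have a3 : 2 * (k : ℂ) * -(σ : ℂ) = -(2 * (k : ℂ) * σ) := by ring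
  have a4 : (-2 : ℂ) * (k : ℂ) * (σ : ℂ) = -(2 * (k : ℂ) * σ) := by ring
  rw [a1, a2, a3, a4]
  field_simp
  ring
end
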